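/- arXiv:1606.05025 — 7 statements merged into one kernel-verified Lean document; each statement's English description precedes it below -/
import Mathlib

section
/- Let g be a complex Gaussian vector in ℂ^M with per-component variance β > 0, where M ≥ 2. Then E[1 / ‖g‖²] = 1 / ((M − 1)·β). -/
open Real Set
open scoped NNReal ENNReal


open MeasureTheory ProbabilityTheory

/-- A family `f : ι → Ω → ℂ` of complex random variables is jointly complex Gaussian with
variances `v : ι → ℝ` if all the real and imaginary parts `Re (f i)`, `Im (f i)` (indexed by
`ι × Bool`) are mutually independent, each with law `gaussianReal 0 (v i / 2)`. -/
def IsJointComplexGaussian {Ω : Type*} {ι : Type*} [MeasurableSpace Ω] (P : Measure Ω)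
    (f : ι → Ω → ℂ) (v : ι → ℝ) : Prop :=
  iIndepFun
      (fun p : ι × Bool => fun ω => if p.2 then (f p.1 ω).im else (f p.1 ω).re) P ∧
    ∀ p : ι × Bool,
      Measure.map (fun ω => if p.2 then (f p.1 ω).im else (f p.1 ω).re) P
        = gaussianReal 0 (Real.toNNReal (v p.1 / 2))

/-- A random vector `g : Ω → ℂ^M` is complex Gaussian with per-component variance `β` if its
`2M` real scalar components are mutually independent with law `gaussianReal 0 (β/2)`. -/
def IsComplexGaussianVector {Ω : Type*} [MeasurableSpace Ω] (P : Measure Ω) {M : ℕ}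
    (g : Ω → EuclideanSpace ℂ (Fin M)) (β : ℝ) : Prop :=
  IsJointComplexGaussian P (fun (i : Fin M) ω => g ω i) (fun _ => β)


section Helpers

-- Lemma C
lemma lintegral_exp_neg_mul_Ioi {s : ℝ} (hs : 0 < s) :
    ∫⁻ t in Ioi (0:ℝ), ENNReal.ofReal (rexp (-(t * s))) = ENNReal.ofReal s⁻¹ := by
  have hderiv : ∀ t ∈ Ici (0:ℝ), HasDerivAt (fun t => -s⁻¹ * rexp (-(t * s)))
      (rexp (-(t * s))) t := by
    intro t _
    have h1 : HasDerivAt (fun t : ℝ => -(t * s)) (-s) t := by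
      exact ((hasDerivAt_id' t).mul_const s).neg.congr_deriv (by ring)
    have := (h1.exp).const_mul (-s⁻¹)
    refine this.congr_deriv ?_
    field_simp
  have hpos : ∀ t ∈ Ioi (0:ℝ), 0 ≤ rexp (-(t * s)) := fun t _ => (Real.exp_pos _).le
  have htend : Filter.Tendsto (fun t => -s⁻¹ * rexp (-(t * s))) Filter.atTop (nhds 0) := by
    have : Filter.Tendsto (fun t : ℝ => -(t * s)) Filter.atTop Filter.atBot := by
      apply Filter.tendsto_neg_atBot_iff.mpr
      exact Filter.Tendsto.atTop_mul_const hs Filter.tendsto_id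
    have h2 := Real.tendsto_exp_atBot.comp this
    simpa using h2.const_mul (-s⁻¹)
  have hint := integrableOn_Ioi_deriv_of_nonneg' hderiv hpos htend
  have hval := integral_Ioi_of_hasDerivAt_of_nonneg' hderiv hpos htend
  rw [← ofReal_integral_eq_lintegral_ofReal hint (ae_restrict_of_ae (Filter.Eventually.of_forall
    fun t => (Real.exp_pos _).le))]
  rw [hval]
  norm_num

-- Lemma D
lemma integral_one_add_mul_pow_neg {β : ℝ} (hβ : 0 < β) {M : ℕ} (hM : 2 ≤ M) :
    IntegrableOn (fun t => ((1 + β * t) ^ M)⁻¹) (Ioi (0:ℝ)) ∧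
    ∫ t in Ioi (0:ℝ), ((1 + β * t) ^ M)⁻¹ = (((M : ℝ) - 1) * β)⁻¹ := by
  have hMpos : (0:ℝ) < (M : ℝ) - 1 := by
    have : (2:ℝ) ≤ M := by exact_mod_cast hM
    linarith
  set c : ℝ := (β * ((M : ℝ) - 1))⁻¹ with hc
  have hderivg : ∀ t ∈ Ici (0:ℝ), HasDerivAt (fun t => -c * ((1 + β * t) ^ (M-1))⁻¹)
      (((1 + β * t) ^ M)⁻¹) t := by
    intro t ht
    have h0 : (0:ℝ) < 1 + β * t := by
      have : 0 ≤ β * t := mul_nonneg hβ.le ht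
      linarith
    have h1 : HasDerivAt (fun t : ℝ => 1 + β * t) β t := by
      simpa using ((hasDerivAt_id t).const_mul β).const_add 1
    have h2 : HasDerivAt (fun t : ℝ => (1 + β * t) ^ (M-1))
        ((M-1 : ℕ) * (1 + β * t) ^ (M-1-1) * β) t := h1.pow (M-1)
    have h3 := (h2.inv (by positivity)).const_mul (-c)
    refine h3.congr_deriv ?_
    have hM1 : (1:ℕ) ≤ M - 1 := by omega
    have hMeq : M - 1 - 1 + (M - 1) + 1 = M + (M - 1 - 1) := by omega
    have hcast : ((M - 1 : ℕ) : ℝ) = (M : ℝ) - 1 := by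
      have : (1:ℕ) ≤ M := by omega
      push_cast [Nat.cast_sub this]; ring
    field_simp [hc, hcast]
    rw [← pow_mul]
    have hMeq2 : (M - 1) * 2 = (M - 1 - 1) + M := by omega
    rw [hMeq2, pow_add]
    rw [hc, hcast]
    field_simp
  have hpos : ∀ t ∈ Ioi (0:ℝ), 0 ≤ ((1 + β * t) ^ M)⁻¹ := by
    intro t ht
    have : (0:ℝ) < 1 + β * t := by
      have : 0 < β * t := mul_pos hβ ht
      linarith
    positivity
  have htend : Filter.Tendsto (fun t => -c * ((1 + β * t) ^ (M-1))⁻¹) Filter.atTop (nhds 0) := by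
    have h1 : Filter.Tendsto (fun t : ℝ => 1 + β * t) Filter.atTop Filter.atTop := by
      apply Filter.tendsto_atTop_add_const_left
      exact Filter.Tendsto.const_mul_atTop hβ Filter.tendsto_id
    have h2 : Filter.Tendsto (fun t : ℝ => (1 + β * t) ^ (M-1)) Filter.atTop Filter.atTop :=
      (Filter.tendsto_pow_atTop (by omega : M - 1 ≠ 0)).comp h1
    have h3 := h2.inv_tendsto_atTop
    simpa using h3.const_mul (-c)
  refine ⟨integrableOn_Ioi_deriv_of_nonneg' hderivg hpos htend, ?_⟩
  rw [integral_Ioi_of_hasDerivAt_of_nonneg' hderivg hpos htend]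
  simp [hc]
  ring

-- Lemma A
lemma lintegral_gaussian_exp_sq {v : ℝ≥0} (hv : v ≠ 0) {t : ℝ} (ht : 0 ≤ t) :
    ∫⁻ x, ENNReal.ofReal (rexp (-(t * x^2))) ∂(gaussianReal 0 v)
      = ENNReal.ofReal ((√(1 + 2*v*t))⁻¹) := by
  have hvpos : (0:ℝ) < v := NNReal.coe_pos.mpr (pos_iff_ne_zero.mpr hv)
  set b : ℝ := t + (2*(v:ℝ))⁻¹ with hb
  have hbpos : 0 < b := by positivity
  rw [gaussianReal_of_var_ne_zero 0 hv]
  rw [lintegral_withDensity_eq_lintegral_mul _ (measurable_gaussianPDF 0 v)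
    (by fun_prop : Measurable fun x : ℝ => ENNReal.ofReal (rexp (-(t * x^2))))]
  have heq : ∀ x : ℝ, (gaussianPDF 0 v * fun x => ENNReal.ofReal (rexp (-(t * x^2)))) x
      = ENNReal.ofReal ((√(2*π*v))⁻¹ * rexp (-b * x^2)) := by
    intro x
    simp only [Pi.mul_apply, gaussianPDF, gaussianPDFReal, sub_zero]
    rw [← ENNReal.ofReal_mul (by positivity)]
    congr 1
    rw [mul_assoc, ← Real.exp_add]
    congr 2
    rw [hb]
    field_simp
    ring
  simp_rw [heq]
  rw [← ofReal_integral_eq_lintegral_ofReal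
    (((integrable_exp_neg_mul_sq hbpos).const_mul _))
    (Filter.Eventually.of_forall fun x => by positivity)]
  rw [integral_const_mul, integral_gaussian]
  congr 1
  rw [← Real.sqrt_inv, ← Real.sqrt_inv, ← Real.sqrt_mul (by positivity)]
  congr 1
  rw [hb]
  field_simp [hvpos.ne']
  ring

-- congruence of iIndepFun under a.e. equality
lemma iIndepFun_congr' {Ω ι : Type*} [MeasurableSpace Ω] {P : Measure Ω}
    {β : Type*} [m : MeasurableSpace β] {f f' : ι → Ω → β}
    (h : ∀ i, f i =ᵐ[P] f' i)
    (hf : iIndepFun f P) : iIndepFun f' P := by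
  rw [iIndepFun_iff_measure_inter_preimage_eq_mul] at hf ⊢
  intro S sets hsets
  have hS : ∀ᵐ ω ∂P, ∀ i ∈ S, f i ω = f' i ω :=
    (ae_ball_iff S.countable_toSet).mpr fun i _ => h i
  have h1 : (⋂ i ∈ S, f i ⁻¹' sets i) =ᵐ[P] (⋂ i ∈ S, f' i ⁻¹' sets i) := by
    rw [Filter.eventuallyEq_set]
    filter_upwards [hS] with ω hω
    simp only [Set.mem_iInter, Set.mem_preimage]
    exact ⟨fun H i hi => hω i hi ▸ H i hi, fun H i hi => (hω i hi).symm ▸ H i hi⟩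
  rw [← measure_congr h1, hf S hsets]
  exact Finset.prod_congr rfl fun i hi => measure_congr
    (Filter.eventuallyEq_set.mpr (by filter_upwards [h i] with ω hω; simp [hω]))

-- Lemma B: lintegral of product of independent ENNReal random variables
lemma lintegral_prod_iIndepFun {Ω ι : Type*} [MeasurableSpace Ω] {P : Measure Ω}
    [IsProbabilityMeasure P] [Fintype ι] [DecidableEq ι] {f : ι → Ω → ℝ≥0∞}
    (hind : iIndepFun f P) (hmeas : ∀ i, AEMeasurable (f i) P) :
    ∫⁻ ω, ∏ i, f i ω ∂P = ∏ i, ∫⁻ ω, f i ω ∂P := by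
  set F : ι → Ω → ℝ≥0∞ := fun i => (hmeas i).mk _ with hF
  have hae : ∀ i, f i =ᵐ[P] F i := fun i => (hmeas i).ae_eq_mk
  have hindF : iIndepFun F P := iIndepFun_congr' hae hind
  have hFm : ∀ i, Measurable (F i) := fun i => (hmeas i).measurable_mk
  have key : ∀ s : Finset ι, ∫⁻ ω, ∏ i ∈ s, F i ω ∂P = ∏ i ∈ s, ∫⁻ ω, F i ω ∂P := by
    intro s
    induction s using Finset.induction with
    | empty => simp
    | @insert i s hi ih =>
      have hip : IndepFun (F i) (∏ j ∈ s, F j) P :=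
        (hindF.indepFun_finsetProd_of_notMem hFm hi).symm
      have hpm : Measurable (∏ j ∈ s, F j) := by
        have : (∏ j ∈ s, F j) = fun ω => ∏ j ∈ s, F j ω := by
          funext ω; exact Finset.prod_apply ω s F
        rw [this]
        exact Finset.measurable_prod s fun j _ => hFm j
      calc ∫⁻ ω, ∏ j ∈ insert i s, F j ω ∂P
          = ∫⁻ ω, F i ω * (∏ j ∈ s, F j) ω ∂P := by
            simp_rw [Finset.prod_insert hi, Finset.prod_apply]
        _ = (∫⁻ ω, F i ω ∂P) * ∫⁻ ω, (∏ j ∈ s, F j) ω ∂P :=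
            lintegral_mul_eq_lintegral_mul_lintegral_of_indepFun''
              (hFm i).aemeasurable hpm.aemeasurable hip
        _ = ∏ j ∈ insert i s, ∫⁻ ω, F j ω ∂P := by
            simp_rw [Finset.prod_apply]
            rw [ih, Finset.prod_insert hi]
  have h1 : ∫⁻ ω, ∏ i, f i ω ∂P = ∫⁻ ω, ∏ i, F i ω ∂P := by
    apply lintegral_congr_ae
    have : ∀ᵐ ω ∂P, ∀ i, f i ω = F i ω := ae_all_iff.mpr fun i => hae i
    filter_upwards [this] with ω hω
    exact Finset.prod_congr rfl fun i _ => hω i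
  rw [h1, key Finset.univ]
  exact Finset.prod_congr rfl fun i _ => (lintegral_congr_ae (hae i)).symm

theorem integral_inv_norm_sq_complexGaussian' {Ω : Type*} [MeasurableSpace Ω]
    (P : Measure Ω) [IsProbabilityMeasure P] (M : ℕ) (hM : 2 ≤ M) (β : ℝ) (hβ : 0 < β)
    (g : Ω → EuclideanSpace ℂ (Fin M))
    (hg : (iIndepFun
      (fun p : Fin M × Bool => fun ω => if p.2 then (g ω p.1).im else (g ω p.1).re) P ∧
    ∀ p : Fin M × Bool,
      Measure.map (fun ω => if p.2 then (g ω p.1).im else (g ω p.1).re) P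
        = gaussianReal 0 (Real.toNNReal (β / 2)))) :
    ∫ ω, 1 / ‖g ω‖ ^ 2 ∂P = 1 / (((M : ℝ) - 1) * β) := by
  obtain ⟨hind, hmap⟩ := hg
  set v : ℝ≥0 := (β/2).toNNReal with hvdef
  have hv : v ≠ 0 := by
    simp only [hvdef, ne_eq, Real.toNNReal_eq_zero, not_le]
    linarith
  have hvcoe : (v : ℝ) = β / 2 := Real.coe_toNNReal _ (by linarith)
  set X : Fin M × Bool → Ω → ℝ :=
    fun p ω => if p.2 then (g ω p.1).im else (g ω p.1).re with hXdef
  have hmapX : ∀ p, Measure.map (X p) P = gaussianReal 0 v := fun p => hmap p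
  have hXae : ∀ p, AEMeasurable (X p) P := by
    intro p
    by_contra h
    have h2 := hmapX p
    rw [Measure.map_of_not_aemeasurable h] at h2
    exact (IsProbabilityMeasure.ne_zero (gaussianReal 0 v)) h2.symm
  set S : Ω → ℝ := fun ω => ∑ p : Fin M × Bool, (X p ω)^2 with hSdef
  have hSae : AEMeasurable S P :=
    Finset.aemeasurable_fun_sum _ fun p _ => ((hXae p).pow aemeasurable_const)
  have hSnn : ∀ ω, 0 ≤ S ω := fun ω => Finset.sum_nonneg fun p _ => sq_nonneg _
  have hnorm : ∀ ω, ‖g ω‖^2 = S ω := by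
    intro ω
    rw [EuclideanSpace.norm_eq, Real.sq_sqrt (Finset.sum_nonneg fun i _ => sq_nonneg _)]
    show _ = ∑ p : Fin M × Bool, X p ω ^ 2
    rw [Fintype.sum_prod_type]
    refine Finset.sum_congr rfl fun i _ => ?_
    rw [Fintype.sum_bool]
    simp only [hXdef, if_true, Bool.false_eq_true, if_false]
    rw [Complex.sq_norm, Complex.normSq_apply]
    ring
  have hpos : ∀ᵐ ω ∂P, 0 < S ω := by
    have h0 : P (X (⟨0, by omega⟩, false) ⁻¹' {0}) = 0 := by
      rw [← Measure.map_apply_of_aemeasurable (hXae _) (measurableSet_singleton 0),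
        hmapX _, gaussianReal_of_var_ne_zero 0 hv]
      exact (withDensity_absolutelyContinuous _ _) (measure_singleton 0)
    have h1 : ∀ᵐ ω ∂P, X (⟨0, by omega⟩, false) ω ≠ 0 := by
      rw [ae_iff]
      simp only [ne_eq, not_not]
      exact h0
    filter_upwards [h1] with ω hω
    calc (0:ℝ) < (X (⟨0, by omega⟩, false) ω)^2 := by positivity
      _ ≤ S ω := Finset.single_le_sum (f := fun p : Fin M × Bool => X p ω ^ 2)
          (fun p _ => sq_nonneg _) (Finset.mem_univ _)
  have hL : ∫⁻ ω, ENNReal.ofReal ((S ω)⁻¹) ∂P = ENNReal.ofReal ((((M:ℝ)-1)*β))⁻¹ := by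
    have step1 : ∫⁻ ω, ENNReal.ofReal ((S ω)⁻¹) ∂P
        = ∫⁻ ω, (∫⁻ t in Ioi (0:ℝ), ENNReal.ofReal (rexp (-(t * S ω)))) ∂P := by
      apply lintegral_congr_ae
      filter_upwards [hpos] with ω hω
      exact (lintegral_exp_neg_mul_Ioi hω).symm
    have hU : AEMeasurable (Function.uncurry fun (ω : Ω) (t : ℝ) =>
        ENNReal.ofReal (rexp (-(t * S ω)))) (P.prod (volume.restrict (Ioi 0))) := by
      have hfst : AEMeasurable (fun q : Ω × ℝ => S q.1) (P.prod (volume.restrict (Ioi 0))) :=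
        hSae.comp_quasiMeasurePreserving Measure.quasiMeasurePreserving_fst
      exact ENNReal.measurable_ofReal.comp_aemeasurable
        ((Real.measurable_exp.comp_aemeasurable
          ((measurable_snd.aemeasurable.mul hfst).neg)))
    rw [step1, lintegral_lintegral_swap hU]
    have step3 : ∫⁻ t in Ioi (0:ℝ), ∫⁻ ω, ENNReal.ofReal (rexp (-(t * S ω))) ∂P
        = ∫⁻ t in Ioi (0:ℝ), ENNReal.ofReal (((1 + β*t)^M)⁻¹) := by
      apply setLIntegral_congr_fun measurableSet_Ioi
      intro t ht
      have hbt : (0:ℝ) ≤ 1 + β * t := by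
        have : 0 < β * t := mul_pos hβ ht
        linarith
      have hprod : ∀ ω, ENNReal.ofReal (rexp (-(t * S ω)))
          = ∏ p : Fin M × Bool, ENNReal.ofReal (rexp (-(t * (X p ω)^2))) := by
        intro ω
        rw [← ENNReal.ofReal_prod_of_nonneg (fun _ _ => (Real.exp_pos _).le), ← Real.exp_sum]
        congr 2
        rw [hSdef, Finset.mul_sum, ← Finset.sum_neg_distrib]
      simp_rw [hprod]
      have hφ : Measurable (fun y : ℝ => ENNReal.ofReal (rexp (-(t * y^2)))) := by
        fun_prop
      have hindt : iIndepFun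
          (fun p ω => ENNReal.ofReal (rexp (-(t * (X p ω)^2)))) P :=
        hind.comp _ (fun _ => hφ)
      rw [lintegral_prod_iIndepFun hindt (fun p => hφ.comp_aemeasurable (hXae p))]
      have hfac : ∀ p : Fin M × Bool, ∫⁻ ω, ENNReal.ofReal (rexp (-(t * (X p ω)^2))) ∂P
          = ENNReal.ofReal ((√(1 + β*t))⁻¹) := by
        intro p
        rw [← lintegral_map' hφ.aemeasurable (hXae p), hmapX p,
          lintegral_gaussian_exp_sq hv (le_of_lt ht)]
        congr 3
        rw [hvcoe]; ring
      simp_rw [hfac]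
      rw [Finset.prod_const]
      have hcard : Fintype.card (Fin M × Bool) = M * 2 := by
        simp [Fintype.card_prod]
      rw [Finset.card_univ, hcard]
      rw [← ENNReal.ofReal_pow (by positivity)]
      congr 1
      rw [inv_pow, pow_mul', Real.sq_sqrt hbt]
    rw [step3]
    obtain ⟨hint, hval⟩ := integral_one_add_mul_pow_neg hβ hM
    rw [← ofReal_integral_eq_lintegral_ofReal hint
      ((ae_restrict_iff' measurableSet_Ioi).mpr (Filter.Eventually.of_forall fun t ht => by
        have : 0 < β * t := mul_pos hβ ht
        positivity))]
    rw [hval]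
  have hMβ : (0:ℝ) < ((M:ℝ) - 1) * β := by
    have : (2:ℝ) ≤ M := by exact_mod_cast hM
    nlinarith
  calc ∫ ω, 1/‖g ω‖^2 ∂P = ∫ ω, (S ω)⁻¹ ∂P := by
        refine integral_congr_ae (Filter.Eventually.of_forall fun ω => ?_)
        show 1 / ‖g ω‖ ^ 2 = (S ω)⁻¹
        rw [one_div, hnorm ω]
    _ = (∫⁻ ω, ENNReal.ofReal ((S ω)⁻¹) ∂P).toReal := by
        rw [integral_eq_lintegral_of_nonneg_ae
          (Filter.Eventually.of_forall fun ω => inv_nonneg.mpr (hSnn ω))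
          hSae.inv.aestronglyMeasurable]
    _ = 1 / (((M : ℝ) - 1) * β) := by
        rw [hL, ENNReal.toReal_ofReal (by positivity), one_div]

end Helpers

/-- For a complex Gaussian vector `g` in `ℂ^M` with per-component variance `β > 0` and `M ≥ 2`,
`E[1/‖g‖²] = 1/((M−1)β)`. -/

theorem integral_inv_norm_sq_complexGaussian {Ω : Type*} [MeasurableSpace Ω]
    (P : Measure Ω) [IsProbabilityMeasure P] (M : ℕ) (hM : 2 ≤ M) (β : ℝ) (hβ : 0 < β)
    (g : Ω → EuclideanSpace ℂ (Fin M))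
    (hg : IsComplexGaussianVector P g β) :
    ∫ ω, 1 / ‖g ω‖ ^ 2 ∂P = 1 / (((M : ℝ) - 1) * β) := by
  exact integral_inv_norm_sq_complexGaussian' P M hM β hβ g hg
end

section
/- Fix L ≥ 1, K_u ≥ 1, cell index j ∈ Fin L, user index n ∈ Fin K_u, constants E_u > 0, E_d > 0, σ² > 0, κ ≥ 0, coefficients β_u : Fin L → Fin K_u → ℝ with β_u j n > 0 and β_u l m ≥ 0, β_b : Fin L → ℝ with β_b l ≥ 0, and β_bjj ≥ 0. For M : ℕ define P_u(M) = E_u/M, P_d(M) = E_d/M and R(M) = log₂( 1 + P_u(M)·(M−1)·β_u j n / ( P_u(M)·Σ_{(l,m)≠(j,n)} β_u l m + P_d(M)·Σ_{l≠j} β_b l + σ² + κ·P_d(M)·β_bjj ) ). Then R(M) → log₂(1 + β_u j n · E_u/σ²) as M → ∞ (Filter.atTop). -/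
/-- Theorem 1, uplink per-user rate: with perfect CSI and transmit powers scaled as
`P_u = E_u/M`, `P_d = E_d/M`, the closed-form uplink achievable rate of user `n` in cell `j`
converges to `log₂(1 + β_u(j,n)·E_u/σ²)` as the number of BS antennas `M → ∞`. -/
theorem asymptotic_uplink_rate_perfect_csi
    (L Ku : ℕ) (hL : 1 ≤ L) (hKu : 1 ≤ Ku) (j : Fin L) (n : Fin Ku)
    (Eu Ed σsq : ℝ) (hEu : 0 < Eu) (hEd : 0 < Ed) (hσ : 0 < σsq)
    (κ : ℝ) (hκ : 0 ≤ κ)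
    (βu : Fin L → Fin Ku → ℝ) (hβujn : 0 < βu j n) (hβu : ∀ l m, 0 ≤ βu l m)
    (βb : Fin L → ℝ) (hβb : ∀ l, 0 ≤ βb l) (βbjj : ℝ) (hβbjj : 0 ≤ βbjj) :
    Filter.Tendsto (fun M : ℕ =>
        Real.logb 2 (1 + (Eu / M) * ((M : ℝ) - 1) * βu j n /
          ((Eu / M) * ∑ p ∈ Finset.univ.erase (j, n), βu p.1 p.2
            + (Ed / M) * ∑ l ∈ Finset.univ.erase j, βb l
            + σsq + κ * (Ed / M) * βbjj)))
      Filter.atTop (nhds (Real.logb 2 (1 + βu j n * Eu / σsq))) := by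
  have hEuM : Filter.Tendsto (fun M : ℕ => Eu / M) Filter.atTop (nhds 0) :=
    tendsto_const_div_atTop_nhds_zero_nat Eu
  have hEdM : Filter.Tendsto (fun M : ℕ => Ed / M) Filter.atTop (nhds 0) :=
    tendsto_const_div_atTop_nhds_zero_nat Ed
  -- numerator tends to Eu * βu j n
  have hnum : Filter.Tendsto (fun M : ℕ => (Eu / M) * ((M : ℝ) - 1) * βu j n)
      Filter.atTop (nhds (Eu * βu j n)) := by
    have heq : ∀ᶠ M : ℕ in Filter.atTop,
        (Eu - Eu / M) * βu j n = (Eu / M) * ((M : ℝ) - 1) * βu j n := by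
      filter_upwards [Filter.eventually_ge_atTop 1] with M hM
      have hM0 : (M : ℝ) ≠ 0 := by positivity
      have h1 : Eu - Eu / M = Eu / M * ((M : ℝ) - 1) := by
        field_simp
      rw [h1]
    have : Filter.Tendsto (fun M : ℕ => (Eu - Eu / M) * βu j n) Filter.atTop
        (nhds ((Eu - 0) * βu j n)) :=
      (tendsto_const_nhds.sub hEuM).mul tendsto_const_nhds
    rw [sub_zero] at this
    exact this.congr' heq
  -- denominator tends to σsq
  have hden : Filter.Tendsto (fun M : ℕ =>
      (Eu / M) * ∑ p ∈ Finset.univ.erase (j, n), βu p.1 p.2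
        + (Ed / M) * ∑ l ∈ Finset.univ.erase j, βb l
        + σsq + κ * (Ed / M) * βbjj) Filter.atTop (nhds σsq) := by
    have h := (((hEuM.mul_const (∑ p ∈ Finset.univ.erase (j, n), βu p.1 p.2)).add
      (hEdM.mul_const (∑ l ∈ Finset.univ.erase j, βb l))).add
      (tendsto_const_nhds (x := σsq))).add ((hEdM.const_mul κ).mul_const βbjj)
    simpa using h
  have harg : Filter.Tendsto (fun M : ℕ =>
      1 + (Eu / M) * ((M : ℝ) - 1) * βu j n /
        ((Eu / M) * ∑ p ∈ Finset.univ.erase (j, n), βu p.1 p.2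
          + (Ed / M) * ∑ l ∈ Finset.univ.erase j, βb l
          + σsq + κ * (Ed / M) * βbjj)) Filter.atTop
      (nhds (1 + βu j n * Eu / σsq)) := by
    have := (tendsto_const_nhds (x := (1:ℝ))).add (hnum.div hden hσ.ne')
    convert this using 2
    · rfl
    · ring
  have hpos : (0 : ℝ) < 1 + βu j n * Eu / σsq := by positivity
  have hcont : ContinuousAt (Real.logb 2) (1 + βu j n * Eu / σsq) :=
    Real.continuousAt_logb hpos.ne'
  exact hcont.tendsto.comp harg
end

section
/- Fix L ≥ 1, K_u ≥ 1, K_d ≥ 1, cell index l ∈ Fin L, user index k ∈ Fin K_d, constants E_u > 0, E_d > 0, σ² > 0, κ ≥ 0, coefficients β_d : Fin L → Fin K_d → ℝ with β_d l i > 0 for all i, β_c : Fin L → ℝ with β_c j ≥ 0 and β_c l = β_d l k, and β_I : Fin L → Fin K_u → ℝ with β_I j n ≥ 0. For M : ℕ define P_u(M) = E_u/M, P_d(M) = E_d/M, η_l(M) = 1/(M·Σ_i β_d l i), I(M) = Σ_{i≠k} η_l(M)·P_d(M)·β_d l k·β_d l i·(M−2) + P_d(M)·Σ_{j≠l} β_c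 j + Σ_{j} Σ_{n} P_u(M)·β_I j n, and R(M) = log₂( 1 + η_l(M)·P_d(M)·(M−1)·(M−2)·(β_d l k)² / ( I(M) − P_u(M)·β_I l k + σ² + κ·P_u(M)·β_I l k ) ). Then R(M) → log₂( 1 + (β_d l k)²·E_d / ( (Σ_i β_d l i)·σ² ) ) as M → ∞ (Filter.atTop). -/
open Filter Real


/-- Theorem 1, downlink per-user rate: with perfect CSI and transmit powers scaled as
`P_u = E_u/M`, `P_d = E_d/M`, the closed-form downlink achievable rate of full-duplex user `k`
in cell `l` converges to `log₂(1 + β_d(l,k)²·E_d/((Σᵢ β_d(l,i))·σ²))` as `M → ∞`.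
The full-duplex user `k` indexes both a downlink user (in `Fin Kd`) and an uplink user
(in `Fin Ku`). -/
theorem asymptotic_downlink_rate_perfect_csi
    (L Ku Kd : ℕ) (hL : 1 ≤ L) (hKu : 1 ≤ Ku) (hKd : 1 ≤ Kd)
    (l : Fin L) (k : ℕ) (hkd : k < Kd) (hku : k < Ku)
    (Eu Ed σsq : ℝ) (hEu : 0 < Eu) (hEd : 0 < Ed) (hσ : 0 < σsq)
    (κ : ℝ) (hκ : 0 ≤ κ)
    (βd : Fin L → Fin Kd → ℝ) (hβd : ∀ i, 0 < βd l i)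
    (βc : Fin L → ℝ) (hβc : ∀ j, 0 ≤ βc j) (hβcl : βc l = βd l ⟨k, hkd⟩)
    (βI : Fin L → Fin Ku → ℝ) (hβI : ∀ j n, 0 ≤ βI j n) :
    Filter.Tendsto (fun M : ℕ =>
        let Pu : ℝ := Eu / M
        let Pd : ℝ := Ed / M
        let η : ℝ := 1 / (M * ∑ i, βd l i)
        let I : ℝ := ∑ i ∈ Finset.univ.erase (⟨k, hkd⟩ : Fin Kd),
            η * Pd * βd l ⟨k, hkd⟩ * βd l i * ((M : ℝ) - 2)
          + Pd * ∑ j ∈ Finset.univ.erase l, βc j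
          + ∑ j, ∑ n, Pu * βI j n
        Real.logb 2 (1 + η * Pd * ((M : ℝ) - 1) * ((M : ℝ) - 2) * (βd l ⟨k, hkd⟩) ^ 2 /
          (I - Pu * βI l ⟨k, hku⟩ + σsq + κ * Pu * βI l ⟨k, hku⟩)))
      Filter.atTop
      (nhds (Real.logb 2 (1 + (βd l ⟨k, hkd⟩) ^ 2 * Ed / ((∑ i, βd l i) * σsq)))) := by
  set β : ℝ := βd l ⟨k, hkd⟩ with hβdef
  set S : ℝ := ∑ i, βd l i with hSdef
  have hS : 0 < S := Finset.sum_pos (fun i _ => hβd i) ⟨⟨k, hkd⟩, Finset.mem_univ _⟩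
  have hβpos : 0 < β := hβd _
  -- basic real-variable limits
  have t1 : Tendsto (fun x : ℝ => (x - 1) * x⁻¹) atTop (nhds 1) := by
    have h : Tendsto (fun x : ℝ => 1 - x⁻¹) atTop (nhds (1 - 0)) :=
      tendsto_const_nhds.sub tendsto_inv_atTop_zero
    rw [sub_zero] at h
    refine h.congr' ?_
    filter_upwards [eventually_ge_atTop (1 : ℝ)] with x hx
    have hx0 : x ≠ 0 := by linarith
    field_simp
  have t2 : Tendsto (fun x : ℝ => (x - 2) * x⁻¹) atTop (nhds 1) := by
    have h : Tendsto (fun x : ℝ => 1 - 2 * x⁻¹) atTop (nhds (1 - 2 * 0)) :=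
      tendsto_const_nhds.sub (tendsto_inv_atTop_zero.const_mul 2)
    rw [mul_zero, sub_zero] at h
    refine h.congr' ?_
    filter_upwards [eventually_ge_atTop (1 : ℝ)] with x hx
    have hx0 : x ≠ 0 := by linarith
    field_simp
  have tinv : Tendsto (fun x : ℝ => x⁻¹) atTop (nhds 0) := tendsto_inv_atTop_zero
  -- numerator limit
  have hnum : Tendsto (fun x : ℝ =>
      1 / (x * S) * (Ed / x) * (x - 1) * (x - 2) * β ^ 2) atTop
      (nhds (β ^ 2 * Ed / S)) := by
    have h : Tendsto (fun x : ℝ => (β ^ 2 * Ed / S) * ((x - 1) * x⁻¹) * ((x - 2) * x⁻¹))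
        atTop (nhds (β ^ 2 * Ed / S * 1 * 1)) :=
      (tendsto_const_nhds.mul t1).mul t2
    rw [mul_one, mul_one] at h
    refine h.congr' ?_
    filter_upwards [eventually_ge_atTop (1 : ℝ)] with x hx
    simp only [div_eq_mul_inv, mul_inv, one_div]
    ring
  -- denominator limit
  have hden : Tendsto (fun x : ℝ =>
      (∑ i ∈ Finset.univ.erase (⟨k, hkd⟩ : Fin Kd),
          1 / (x * S) * (Ed / x) * β * βd l i * (x - 2)
        + (Ed / x) * ∑ j ∈ Finset.univ.erase l, βc j
        + ∑ j, ∑ n, (Eu / x) * βI j n)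
      - (Eu / x) * βI l ⟨k, hku⟩ + σsq + κ * (Eu / x) * βI l ⟨k, hku⟩) atTop
      (nhds σsq) := by
    have hA : Tendsto (fun x : ℝ =>
        ∑ i ∈ Finset.univ.erase (⟨k, hkd⟩ : Fin Kd),
          1 / (x * S) * (Ed / x) * β * βd l i * (x - 2)) atTop (nhds 0) := by
      have h : Tendsto (fun x : ℝ =>
          ((Ed * β / S) * ∑ i ∈ Finset.univ.erase (⟨k, hkd⟩ : Fin Kd), βd l i)
            * ((x - 2) * x⁻¹) * x⁻¹) atTop
          (nhds ((Ed * β / S) * (∑ i ∈ Finset.univ.erase (⟨k, hkd⟩ : Fin Kd), βd l i) * 1 * 0)) :=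
        (tendsto_const_nhds.mul t2).mul tinv
      rw [mul_zero] at h
      refine h.congr' ?_
      filter_upwards [eventually_ge_atTop (1 : ℝ)] with x hx
      have hx0 : x ≠ 0 := by linarith
      rw [Finset.mul_sum, Finset.sum_mul, Finset.sum_mul]
      refine Finset.sum_congr rfl fun i _ => ?_
      simp only [div_eq_mul_inv, mul_inv, one_div]
      ring
    have hB : Tendsto (fun x : ℝ =>
        (Ed / x) * ∑ j ∈ Finset.univ.erase l, βc j) atTop (nhds 0) := by
      have h : Tendsto (fun x : ℝ =>
          (Ed * ∑ j ∈ Finset.univ.erase l, βc j) * x⁻¹) atTop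
          (nhds ((Ed * ∑ j ∈ Finset.univ.erase l, βc j) * 0)) := tendsto_const_nhds.mul tinv
      rw [mul_zero] at h
      exact h.congr fun x => by ring
    have hC : Tendsto (fun x : ℝ =>
        ∑ j, ∑ n, (Eu / x) * βI j n) atTop (nhds 0) := by
      have h : Tendsto (fun x : ℝ =>
          (Eu * ∑ j, ∑ n, βI j n) * x⁻¹) atTop
          (nhds ((Eu * ∑ j, ∑ n, βI j n) * 0)) := tendsto_const_nhds.mul tinv
      rw [mul_zero] at h
      refine h.congr fun x => ?_
      rw [Finset.mul_sum, Finset.sum_mul]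
      refine Finset.sum_congr rfl fun j _ => ?_
      rw [Finset.mul_sum, Finset.sum_mul]
      refine Finset.sum_congr rfl fun n _ => ?_
      ring
    have hD : Tendsto (fun x : ℝ => (Eu / x) * βI l ⟨k, hku⟩) atTop (nhds 0) := by
      have h : Tendsto (fun x : ℝ => (Eu * βI l ⟨k, hku⟩) * x⁻¹) atTop
          (nhds ((Eu * βI l ⟨k, hku⟩) * 0)) := tendsto_const_nhds.mul tinv
      rw [mul_zero] at h
      exact h.congr fun x => by ring
    have hD' : Tendsto (fun x : ℝ => κ * (Eu / x) * βI l ⟨k, hku⟩) atTop (nhds 0) := by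
      have := hD.const_mul κ
      rw [mul_zero] at this
      exact this.congr fun x => by ring
    have hc : Tendsto (fun _ : ℝ => σsq) atTop (nhds σsq) := tendsto_const_nhds
    have := ((((hA.add hB).add hC).sub hD).add hc).add hD'
    simpa using this
  -- inner argument limit
  have hinner : Tendsto (fun x : ℝ =>
      1 + 1 / (x * S) * (Ed / x) * (x - 1) * (x - 2) * β ^ 2 /
        ((∑ i ∈ Finset.univ.erase (⟨k, hkd⟩ : Fin Kd),
            1 / (x * S) * (Ed / x) * β * βd l i * (x - 2)
          + (Ed / x) * ∑ j ∈ Finset.univ.erase l, βc j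
          + ∑ j, ∑ n, (Eu / x) * βI j n)
        - (Eu / x) * βI l ⟨k, hku⟩ + σsq + κ * (Eu / x) * βI l ⟨k, hku⟩)) atTop
      (nhds (1 + β ^ 2 * Ed / (S * σsq))) := by
    have : Tendsto (fun x : ℝ => _) atTop (nhds (1 + (β ^ 2 * Ed / S) / σsq)) :=
      tendsto_const_nhds.add (hnum.div hden (ne_of_gt hσ))
    rwa [div_div] at this
  have hpos : (0 : ℝ) < 1 + β ^ 2 * Ed / (S * σsq) := by positivity
  have hlog : Tendsto (fun x : ℝ =>
      Real.logb 2 (1 + 1 / (x * S) * (Ed / x) * (x - 1) * (x - 2) * β ^ 2 /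
        ((∑ i ∈ Finset.univ.erase (⟨k, hkd⟩ : Fin Kd),
            1 / (x * S) * (Ed / x) * β * βd l i * (x - 2)
          + (Ed / x) * ∑ j ∈ Finset.univ.erase l, βc j
          + ∑ j, ∑ n, (Eu / x) * βI j n)
        - (Eu / x) * βI l ⟨k, hku⟩ + σsq + κ * (Eu / x) * βI l ⟨k, hku⟩))) atTop
      (nhds (Real.logb 2 (1 + β ^ 2 * Ed / (S * σsq)))) := by
    simp only [Real.logb]
    exact (hinner.log (ne_of_gt hpos)).div_const _
  exact hlog.comp tendsto_natCast_atTop_atTop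
end

section
/- Fix L ≥ 1, K_u ≥ 1, cell index j ∈ Fin L, user index n ∈ Fin K_u, constants E_tr > 0, E_u > 0, E_d > 0, σ² > 0, κ ≥ 0, coefficients β_u : Fin L → Fin K_u → ℝ with β_u j n > 0 and β_u l m ≥ 0, β_b : Fin L → ℝ with β_b l ≥ 0, and β_bjj ≥ 0. For M : ℕ with M ≥ 1 define P_tr(M) = E_tr/√M, P_u(M) = E_u/√M, P_d(M) = E_d/√M, λ(M) = σ² + P_tr(M)·Σ_l β_u l n, Ĩ(M) = P_tr(M)·P_u(M)·Σ_{l≠j} [ (M+1)·(β_u l n)² + (Σ_{l₁≠l} β_u l₁ n)·β_u l n + β_u l n·σ²/P_tr(M) ], Ñ(M) = λ(M)·( P_d(M)·Σ_{l≠j} β_b l + P_u(M)·Σ_l Σ_{m≠n} β_u l m + σ² + κ·P_d(M)·β_bjj ), and R(M) = log₂( 1 + P_tr(M)·P_u(M)·(M−1)·(β_u j n)² / ( P_u(M)·β_u j n·(σ² + P_tr(M)·Σ_{l≠j} β_u l n) + Ĩ(M) + Ñ(M) ) ). Then R(M) → log₂( 1 + E_tr·E_u·(β_u j n)² / ( E_tr·E_u·Σ_{l≠j}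 (β_u l n)² + σ⁴ ) ) as M → ∞ (Filter.atTop). -/
open Filter Finset Real

set_option maxHeartbeats 1000000


/-- Theorem 2, uplink per-user rate: with MMSE channel estimation and powers scaled as
`P_tr = E_tr/√M`, `P_u = E_u/√M`, `P_d = E_d/√M`, the closed-form uplink achievable rate of
user `n` in cell `j` converges to the pilot-contamination limit
`log₂(1 + E_tr·E_u·β_u(j,n)² / (E_tr·E_u·Σ_{l≠j} β_u(l,n)² + σ⁴))` as `M → ∞`. -/
theorem asymptotic_uplink_rate_imperfect_csi
    (L Ku : ℕ) (hL : 1 ≤ L) (hKu : 1 ≤ Ku) (j : Fin L) (n : Fin Ku)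
    (Etr Eu Ed σsq : ℝ) (hEtr : 0 < Etr) (hEu : 0 < Eu) (hEd : 0 < Ed) (hσ : 0 < σsq)
    (κ : ℝ) (hκ : 0 ≤ κ)
    (βu : Fin L → Fin Ku → ℝ) (hβujn : 0 < βu j n) (hβu : ∀ l m, 0 ≤ βu l m)
    (βb : Fin L → ℝ) (hβb : ∀ l, 0 ≤ βb l) (βbjj : ℝ) (hβbjj : 0 ≤ βbjj) :
    Filter.Tendsto (fun M : ℕ =>
        let Ptr : ℝ := Etr / Real.sqrt M
        let Pu : ℝ := Eu / Real.sqrt M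
        let Pd : ℝ := Ed / Real.sqrt M
        let lam : ℝ := σsq + Ptr * ∑ l, βu l n
        let Itil : ℝ := Ptr * Pu * ∑ l ∈ Finset.univ.erase j,
          (((M : ℝ) + 1) * (βu l n) ^ 2
            + (∑ l₁ ∈ Finset.univ.erase l, βu l₁ n) * βu l n
            + βu l n * σsq / Ptr)
        let Ntil : ℝ := lam * (Pd * ∑ l ∈ Finset.univ.erase j, βb l
          + Pu * ∑ l, ∑ m ∈ Finset.univ.erase n, βu l m
          + σsq + κ * Pd * βbjj)
        Real.logb 2 (1 + Ptr * Pu * ((M : ℝ) - 1) * (βu j n) ^ 2 /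
          (Pu * βu j n * (σsq + Ptr * ∑ l ∈ Finset.univ.erase j, βu l n) + Itil + Ntil)))
      Filter.atTop
      (nhds (Real.logb 2 (1 + Etr * Eu * (βu j n) ^ 2 /
        (Etr * Eu * ∑ l ∈ Finset.univ.erase j, (βu l n) ^ 2 + σsq ^ 2)))) := by
  set s1 : ℝ := ∑ l ∈ Finset.univ.erase j, βu l n with hs1
  set s2 : ℝ := ∑ l ∈ Finset.univ.erase j, (βu l n) ^ 2 with hs2
  set s3 : ℝ := ∑ l ∈ Finset.univ.erase j,
      (∑ l₁ ∈ Finset.univ.erase l, βu l₁ n) * βu l n with hs3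
  set sall : ℝ := ∑ l, βu l n with hsall
  set A : ℝ := ∑ l ∈ Finset.univ.erase j, βb l with hA
  set B : ℝ := ∑ l, ∑ m ∈ Finset.univ.erase n, βu l m with hB
  set C : ℝ := Ed * A + Eu * B + κ * Ed * βbjj with hC
  set Dd : ℝ → ℝ := fun x => Eu * βu j n * x * (σsq + Etr * s1 * x)
      + (Etr * Eu * ((1 + x ^ 2) * s2 + x ^ 2 * s3) + Eu * σsq * x * s1)
      + (σsq + Etr * sall * x) * (C * x + σsq) with hDd
  set Nn : ℝ → ℝ := fun x => Etr * Eu * (1 - x ^ 2) * (βu j n) ^ 2 with hNn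
  have hs1n : 0 ≤ s1 := Finset.sum_nonneg fun l _ => hβu l n
  have hs2n : 0 ≤ s2 := Finset.sum_nonneg fun l _ => sq_nonneg _
  have hD0 : Dd 0 = Etr * Eu * s2 + σsq ^ 2 := by simp [hDd]; ring
  have hD0ne : Dd 0 ≠ 0 := by rw [hD0]; positivity
  have hF0 : Nn 0 / Dd 0 = Etr * Eu * (βu j n) ^ 2 / (Etr * Eu * s2 + σsq ^ 2) := by
    rw [hD0]; simp [hNn]
  have hx : Tendsto (fun M : ℕ => 1 / Real.sqrt M) atTop (nhds 0) := by
    have h1 : Tendsto (fun M : ℕ => Real.sqrt M) atTop atTop := by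
      refine tendsto_atTop_atTop.mpr fun b => ⟨⌈b⌉₊ ^ 2, fun M hM => ?_⟩
      have h2 : ((⌈b⌉₊ : ℝ)) ^ 2 ≤ (M : ℝ) := by exact_mod_cast hM
      calc b ≤ (⌈b⌉₊ : ℝ) := Nat.le_ceil b
        _ = Real.sqrt ((⌈b⌉₊ : ℝ) ^ 2) := (Real.sqrt_sq (Nat.cast_nonneg _)).symm
        _ ≤ Real.sqrt M := Real.sqrt_le_sqrt h2
    exact (tendsto_inv_atTop_zero.comp h1).congr fun M => (one_div _).symm
  have hcont : ContinuousAt (fun x => Nn x / Dd x) 0 := by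
    apply ContinuousAt.div
    · fun_prop
    · fun_prop
    · exact hD0ne
  have hF : Tendsto (fun M : ℕ => Nn (1 / Real.sqrt M) / Dd (1 / Real.sqrt M)) atTop
      (nhds (Nn 0 / Dd 0)) := hcont.tendsto.comp hx
  have hlim : Tendsto (fun M : ℕ => Real.logb 2 (1 + Nn (1 / Real.sqrt M) / Dd (1 / Real.sqrt M)))
      atTop (nhds (Real.logb 2 (1 + Nn 0 / Dd 0))) := by
    have h1 : Tendsto (fun M : ℕ => 1 + Nn (1 / Real.sqrt M) / Dd (1 / Real.sqrt M)) atTop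
        (nhds (1 + Nn 0 / Dd 0)) := tendsto_const_nhds.add hF
    have hne : (1 : ℝ) + Nn 0 / Dd 0 ≠ 0 := by
      have : 0 ≤ Nn 0 / Dd 0 := by
        rw [hF0]; positivity
      positivity
    simp only [Real.logb]
    exact (h1.log hne).div_const _
  rw [hF0] at hlim
  refine Filter.Tendsto.congr' ?_ hlim
  filter_upwards [eventually_ge_atTop 1] with M hM
  have hs : (0:ℝ) < Real.sqrt M := Real.sqrt_pos.mpr (by exact_mod_cast Nat.lt_of_lt_of_le Nat.zero_lt_one hM)
  have hss : Real.sqrt M * Real.sqrt M = (M : ℝ) := Real.mul_self_sqrt (Nat.cast_nonneg M)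
  simp only []
  congr 1
  congr 1
  have hsum : (∑ l ∈ Finset.univ.erase j, (((M : ℝ) + 1) * (βu l n) ^ 2
      + (∑ l₁ ∈ Finset.univ.erase l, βu l₁ n) * βu l n
      + βu l n * σsq / (Etr / Real.sqrt M)))
      = ((M : ℝ) + 1) * s2 + s3 + s1 * σsq / (Etr / Real.sqrt M) := by
    simp only [hs1, hs2, hs3]
    rw [Finset.sum_add_distrib, Finset.sum_add_distrib, ← Finset.mul_sum,
      ← Finset.sum_div, ← Finset.sum_mul]
  rw [hsum]
  simp only [hNn, hDd]
  generalize hg : Real.sqrt (M : ℝ) = a at hs hss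
  rw [← hss]
  have ha : a ≠ 0 := hs.ne'
  congr 1
  · field_simp
  · field_simp
    ring
end

section
/- Fix L ≥ 1, K_u ≥ 1, K_d ≥ 1, cell index l ∈ Fin L, user index k ∈ Fin K_d, constants E_tr > 0, E_u > 0, E_d > 0, σ² > 0, κ ≥ 0, coefficients β : Fin L → Fin L → Fin K_d → ℝ (β j l' i is the large-scale coefficient between BS j and downlink user i of cell l') with β j j i > 0 for all j, i and β j l' i ≥ 0 otherwise, and β_I : Fin L → Fin K_u → ℝ with β_I j n ≥ 0. For M : ℕ with M ≥ 1 define P_tr(M) = E_tr/√M, P_u(M) = E_u/√M, P_d(M) = E_d/√M, λ_{j,i}(M) = σ² + P_tr(M)·Σ_{l₁} β j l₁ i, η̃_j(M) = ( Σ_i (β j j i)²/λ_{j,i}(M) )⁻¹, Ĩ(M) = η̃_l(M)·P_d(M)·(β l l k)³/λ_{l,k}(M) + Σ_{j≠l} η̃_j(M)·P_tr(M)·P_d(M)·(M+1)·(β j l k)²·(β j j k)²/λ_{j,k}(M)² + Σ_{j≠l} η̃_j(M)·P_d(M)·(β j j k)²·(σ² + P_tr(M)·Σ_{l₁≠l}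 β j l₁ k)·β j l k/λ_{j,k}(M)² + Σ_j Σ_{i≠k} η̃_j(M)·P_d(M)·(β j j i)²·β j l k/λ_{j,i}(M) + Σ_j Σ_n P_u(M)·β_I j n, and R(M) = log₂( 1 + η̃_l(M)·P_tr(M)·P_d(M)·M·(β l l k)⁴ / ( λ_{l,k}(M)²·( Ĩ(M) − P_u(M)·β_I l k + σ² + κ·P_u(M)·β_I l k ) ) ). Then, with Z_j := (Σ_i (β j j i)²)/σ², R(M) → log₂( 1 + E_tr·E_d·(β l l k)⁴ / ( Z_l·( Σ_{j≠l} E_tr·E_d·(β j j k)²·(β j l k)²/Z_j + σ⁶ ) ) ) as M → ∞ (Filter.atTop). -/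
set_option maxHeartbeats 2000000 in
/-- Theorem 2, downlink per-user rate: with MMSE channel estimation and powers scaled as
`P_tr = E_tr/√M`, `P_u = E_u/√M`, `P_d = E_d/√M`, the closed-form downlink achievable rate of
full-duplex user `k` in cell `l` converges to the pilot-contamination limit
`log₂(1 + E_tr·E_d·β(l,l,k)⁴ / (Z_l·(Σ_{j≠l} E_tr·E_d·β(j,j,k)²·β(j,l,k)²/Z_j + σ⁶)))`
as `M → ∞`, where `Z_j = (Σᵢ β(j,j,i)²)/σ²`. -/
theorem asymptotic_downlink_rate_imperfect_csi
    (L Ku Kd : ℕ) (hL : 1 ≤ L) (hKu : 1 ≤ Ku) (hKd : 1 ≤ Kd)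
    (l : Fin L) (k : ℕ) (hkd : k < Kd) (hku : k < Ku)
    (Etr Eu Ed σsq : ℝ) (hEtr : 0 < Etr) (hEu : 0 < Eu) (hEd : 0 < Ed) (hσ : 0 < σsq)
    (κ : ℝ) (hκ : 0 ≤ κ)
    (β : Fin L → Fin L → Fin Kd → ℝ)
    (hβpos : ∀ j i, 0 < β j j i) (hβ : ∀ j l' i, 0 ≤ β j l' i)
    (βI : Fin L → Fin Ku → ℝ) (hβI : ∀ j n, 0 ≤ βI j n) :
    Filter.Tendsto (fun M : ℕ =>
        let Ptr : ℝ := Etr / Real.sqrt M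
        let Pu : ℝ := Eu / Real.sqrt M
        let Pd : ℝ := Ed / Real.sqrt M
        let kd : Fin Kd := ⟨k, hkd⟩
        let ku : Fin Ku := ⟨k, hku⟩
        let lam : Fin L → Fin Kd → ℝ := fun j i => σsq + Ptr * ∑ l₁, β j l₁ i
        let η : Fin L → ℝ := fun j => (∑ i, (β j j i) ^ 2 / lam j i)⁻¹
        let Itil : ℝ := η l * Pd * (β l l kd) ^ 3 / lam l kd
          + ∑ j ∈ Finset.univ.erase l,
              η j * Ptr * Pd * ((M : ℝ) + 1) * (β j l kd) ^ 2 * (β j j kd) ^ 2 / (lam j kd) ^ 2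
          + ∑ j ∈ Finset.univ.erase l,
              η j * Pd * (β j j kd) ^ 2 * (σsq + Ptr * ∑ l₁ ∈ Finset.univ.erase l, β j l₁ kd)
                * β j l kd / (lam j kd) ^ 2
          + ∑ j, ∑ i ∈ Finset.univ.erase kd, η j * Pd * (β j j i) ^ 2 * β j l kd / lam j i
          + ∑ j, ∑ n, Pu * βI j n
        Real.logb 2 (1 + η l * Ptr * Pd * M * (β l l kd) ^ 4 /
          ((lam l kd) ^ 2 * (Itil - Pu * βI l ku + σsq + κ * Pu * βI l ku))))
      Filter.atTop
      (nhds (Real.logb 2 (1 + Etr * Ed * (β l l ⟨k, hkd⟩) ^ 4 /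
        ((∑ i, (β l l i) ^ 2) / σsq *
          (∑ j ∈ Finset.univ.erase l,
              Etr * Ed * (β j j ⟨k, hkd⟩) ^ 2 * (β j l ⟨k, hkd⟩) ^ 2 / ((∑ i, (β j j i) ^ 2) / σsq)
            + σsq ^ 3))))) := by
  have hσ' : σsq ≠ 0 := hσ.ne'
  set kd : Fin Kd := ⟨k, hkd⟩ with hkddef
  set ku : Fin Ku := ⟨k, hku⟩ with hkudef
  simp only []
  -- basic limits
  have hx : Filter.Tendsto (fun M : ℕ => (Real.sqrt M)⁻¹) Filter.atTop (nhds 0) := by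
    have h1 : Filter.Tendsto (fun M : ℕ => ((M : ℝ))⁻¹) Filter.atTop (nhds 0) :=
      tendsto_inv_atTop_zero.comp tendsto_natCast_atTop_atTop
    have h2 := (Real.continuous_sqrt.tendsto 0).comp h1
    simpa [Function.comp_def, Real.sqrt_inv] using h2
  have hc : ∀ c : ℝ, Filter.Tendsto (fun M : ℕ => c / Real.sqrt M) Filter.atTop (nhds 0) := by
    intro c
    simpa [div_eq_mul_inv] using hx.const_mul c
  have hMinv : Filter.Tendsto (fun M : ℕ => ((M : ℝ))⁻¹) Filter.atTop (nhds 0) :=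
    tendsto_inv_atTop_zero.comp tendsto_natCast_atTop_atTop
  have hlam : ∀ (j : Fin L) (i : Fin Kd),
      Filter.Tendsto (fun M : ℕ => σsq + Etr / Real.sqrt M * ∑ l₁, β j l₁ i)
        Filter.atTop (nhds σsq) := by
    intro j i
    have := ((hc Etr).mul_const (∑ l₁, β j l₁ i)).const_add σsq
    simpa using this
  have hlam' : ∀ j : Fin L,
      Filter.Tendsto (fun M : ℕ => σsq + Etr / Real.sqrt M * ∑ l₁ ∈ Finset.univ.erase l, β j l₁ kd)
        Filter.atTop (nhds σsq) := by
    intro j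
    have := ((hc Etr).mul_const (∑ l₁ ∈ Finset.univ.erase l, β j l₁ kd)).const_add σsq
    simpa using this
  have hSpos : ∀ j : Fin L, 0 < ∑ i, (β j j i) ^ 2 := fun j =>
    Finset.sum_pos' (fun i _ => sq_nonneg _) ⟨kd, Finset.mem_univ kd, pow_pos (hβpos j kd) 2⟩
  have hSne : ∀ j : Fin L, (∑ i, (β j j i) ^ 2) ≠ 0 := fun j => (hSpos j).ne'
  have hη : ∀ j : Fin L,
      Filter.Tendsto
        (fun M : ℕ => (∑ i, (β j j i) ^ 2 / (σsq + Etr / Real.sqrt M * ∑ l₁, β j l₁ i))⁻¹)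
        Filter.atTop (nhds ((∑ i, (β j j i) ^ 2) / σsq)⁻¹) := by
    intro j
    have hsum : Filter.Tendsto
        (fun M : ℕ => ∑ i, (β j j i) ^ 2 / (σsq + Etr / Real.sqrt M * ∑ l₁, β j l₁ i))
        Filter.atTop (nhds (∑ i, (β j j i) ^ 2 / σsq)) :=
      tendsto_finset_sum _ (fun i _ => tendsto_const_nhds.div (hlam j i) hσ')
    rw [Finset.sum_div]
    refine hsum.inv₀ ?_
    rw [← Finset.sum_div]
    exact div_ne_zero (hSne j) hσ'
  have hEE : Filter.Tendsto (fun M : ℕ => Etr * Ed * (1 + ((M : ℝ))⁻¹))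
      Filter.atTop (nhds (Etr * Ed)) := by
    simpa using (hMinv.const_add 1).const_mul (Etr * Ed)
  -- components of the cleaned-up inner interference term
  have ht1 : Filter.Tendsto (fun M : ℕ =>
      (∑ i, (β l l i) ^ 2 / (σsq + Etr / Real.sqrt M * ∑ l₁, β l l₁ i))⁻¹ * (Ed / Real.sqrt M) *
        β l l kd ^ 3 / (σsq + Etr / Real.sqrt M * ∑ l₁, β l l₁ kd))
      Filter.atTop (nhds 0) := by
    have := (((hη l).mul (hc Ed)).mul_const (β l l kd ^ 3)).div (hlam l kd) hσ'
    simp only [mul_zero, zero_mul, zero_div] at this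
    exact this
  have ht2 : Filter.Tendsto (fun M : ℕ =>
      ∑ j ∈ Finset.univ.erase l,
        (∑ i, (β j j i) ^ 2 / (σsq + Etr / Real.sqrt M * ∑ l₁, β j l₁ i))⁻¹ *
          (Etr * Ed * (1 + ((M : ℝ))⁻¹)) * β j l kd ^ 2 * β j j kd ^ 2 /
          (σsq + Etr / Real.sqrt M * ∑ l₁, β j l₁ kd) ^ 2)
      Filter.atTop
      (nhds (∑ j ∈ Finset.univ.erase l,
        ((∑ i, (β j j i) ^ 2) / σsq)⁻¹ * (Etr * Ed) * β j l kd ^ 2 * β j j kd ^ 2 / σsq ^ 2)) :=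
    tendsto_finset_sum _ (fun j _ =>
      ((((hη j).mul hEE).mul_const (β j l kd ^ 2)).mul_const (β j j kd ^ 2)).div
        ((hlam j kd).pow 2) (pow_ne_zero 2 hσ'))
  have ht3 : Filter.Tendsto (fun M : ℕ =>
      ∑ j ∈ Finset.univ.erase l,
        (∑ i, (β j j i) ^ 2 / (σsq + Etr / Real.sqrt M * ∑ l₁, β j l₁ i))⁻¹ *
          (Ed / Real.sqrt M) * β j j kd ^ 2 *
          (σsq + Etr / Real.sqrt M * ∑ l₁ ∈ Finset.univ.erase l, β j l₁ kd) * β j l kd /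
          (σsq + Etr / Real.sqrt M * ∑ l₁, β j l₁ kd) ^ 2)
      Filter.atTop (nhds 0) := by
    have := tendsto_finset_sum (Finset.univ.erase l) (fun j _ =>
      (((((hη j).mul (hc Ed)).mul_const (β j j kd ^ 2)).mul (hlam' j)).mul_const (β j l kd)).div
        ((hlam j kd).pow 2) (pow_ne_zero 2 hσ'))
    simpa using this
  have ht4 : Filter.Tendsto (fun M : ℕ =>
      ∑ j, ∑ i ∈ Finset.univ.erase kd,
        (∑ i', (β j j i') ^ 2 / (σsq + Etr / Real.sqrt M * ∑ l₁, β j l₁ i'))⁻¹ *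
          (Ed / Real.sqrt M) * β j j i ^ 2 * β j l kd /
          (σsq + Etr / Real.sqrt M * ∑ l₁, β j l₁ i))
      Filter.atTop (nhds 0) := by
    have := tendsto_finset_sum (Finset.univ (α := Fin L)) (fun j _ =>
      tendsto_finset_sum (Finset.univ.erase kd) (fun i _ =>
        ((((hη j).mul (hc Ed)).mul_const (β j j i ^ 2)).mul_const (β j l kd)).div
          (hlam j i) hσ'))
    simpa using this
  have ht5 : Filter.Tendsto (fun M : ℕ => ∑ j, ∑ n, Eu / Real.sqrt M * βI j n)
      Filter.atTop (nhds 0) := by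
    have := tendsto_finset_sum (Finset.univ (α := Fin L)) (fun j _ =>
      tendsto_finset_sum (Finset.univ (α := Fin Ku)) (fun n _ => (hc Eu).mul_const (βI j n)))
    simpa using this
  have hsub : Filter.Tendsto (fun M : ℕ => Eu / Real.sqrt M * βI l ku)
      Filter.atTop (nhds 0) := by
    simpa using (hc Eu).mul_const (βI l ku)
  have hκt : Filter.Tendsto (fun M : ℕ => κ * (Eu / Real.sqrt M) * βI l ku)
      Filter.atTop (nhds 0) := by
    simpa using ((hc Eu).const_mul κ).mul_const (βI l ku)
  -- nonnegativity of the surviving pilot-contamination sum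
  have hT2 : 0 ≤ ∑ j ∈ Finset.univ.erase l,
      ((∑ i, (β j j i) ^ 2) / σsq)⁻¹ * (Etr * Ed) * β j l kd ^ 2 * β j j kd ^ 2 / σsq ^ 2 :=
    Finset.sum_nonneg fun j _ => by positivity
  -- the inner bracket converges
  have hinner : Filter.Tendsto (fun M : ℕ =>
      (∑ i, (β l l i) ^ 2 / (σsq + Etr / Real.sqrt M * ∑ l₁, β l l₁ i))⁻¹ * (Ed / Real.sqrt M) *
        β l l kd ^ 3 / (σsq + Etr / Real.sqrt M * ∑ l₁, β l l₁ kd)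
      + (∑ j ∈ Finset.univ.erase l,
        (∑ i, (β j j i) ^ 2 / (σsq + Etr / Real.sqrt M * ∑ l₁, β j l₁ i))⁻¹ *
          (Etr * Ed * (1 + ((M : ℝ))⁻¹)) * β j l kd ^ 2 * β j j kd ^ 2 /
          (σsq + Etr / Real.sqrt M * ∑ l₁, β j l₁ kd) ^ 2)
      + (∑ j ∈ Finset.univ.erase l,
        (∑ i, (β j j i) ^ 2 / (σsq + Etr / Real.sqrt M * ∑ l₁, β j l₁ i))⁻¹ *
          (Ed / Real.sqrt M) * β j j kd ^ 2 *
          (σsq + Etr / Real.sqrt M * ∑ l₁ ∈ Finset.univ.erase l, β j l₁ kd) * β j l kd /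
          (σsq + Etr / Real.sqrt M * ∑ l₁, β j l₁ kd) ^ 2)
      + (∑ j, ∑ i ∈ Finset.univ.erase kd,
        (∑ i', (β j j i') ^ 2 / (σsq + Etr / Real.sqrt M * ∑ l₁, β j l₁ i'))⁻¹ *
          (Ed / Real.sqrt M) * β j j i ^ 2 * β j l kd /
          (σsq + Etr / Real.sqrt M * ∑ l₁, β j l₁ i))
      + (∑ j, ∑ n, Eu / Real.sqrt M * βI j n)
      - Eu / Real.sqrt M * βI l ku + σsq + κ * (Eu / Real.sqrt M) * βI l ku)
      Filter.atTop
      (nhds ((∑ j ∈ Finset.univ.erase l,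
        ((∑ i, (β j j i) ^ 2) / σsq)⁻¹ * (Etr * Ed) * β j l kd ^ 2 * β j j kd ^ 2 / σsq ^ 2)
        + σsq)) := by
    have := (((((((ht1.add ht2).add ht3).add ht4).add ht5).sub hsub).add_const σsq).add hκt)
    simpa using this
  -- numerator and denominator
  have hnum : Filter.Tendsto (fun M : ℕ =>
      (∑ i, (β l l i) ^ 2 / (σsq + Etr / Real.sqrt M * ∑ l₁, β l l₁ i))⁻¹ * (Etr * Ed) *
        β l l kd ^ 4)
      Filter.atTop
      (nhds (((∑ i, (β l l i) ^ 2) / σsq)⁻¹ * (Etr * Ed) * β l l kd ^ 4)) :=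
    ((hη l).mul_const (Etr * Ed)).mul_const (β l l kd ^ 4)
  have hdenne : σsq ^ 2 * ((∑ j ∈ Finset.univ.erase l,
      ((∑ i, (β j j i) ^ 2) / σsq)⁻¹ * (Etr * Ed) * β j l kd ^ 2 * β j j kd ^ 2 / σsq ^ 2)
      + σsq) ≠ 0 := by positivity
  have hden := ((hlam l kd).pow 2).mul hinner
  -- the cleaned-up full argument converges
  have harg : Filter.Tendsto (fun M : ℕ =>
      1 + (∑ i, (β l l i) ^ 2 / (σsq + Etr / Real.sqrt M * ∑ l₁, β l l₁ i))⁻¹ * (Etr * Ed) *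
        β l l kd ^ 4 /
        ((σsq + Etr / Real.sqrt M * ∑ l₁, β l l₁ kd) ^ 2 *
          ((∑ i, (β l l i) ^ 2 / (σsq + Etr / Real.sqrt M * ∑ l₁, β l l₁ i))⁻¹ *
              (Ed / Real.sqrt M) * β l l kd ^ 3 /
              (σsq + Etr / Real.sqrt M * ∑ l₁, β l l₁ kd)
            + (∑ j ∈ Finset.univ.erase l,
                (∑ i, (β j j i) ^ 2 / (σsq + Etr / Real.sqrt M * ∑ l₁, β j l₁ i))⁻¹ *
                  (Etr * Ed * (1 + ((M : ℝ))⁻¹)) * β j l kd ^ 2 * β j j kd ^ 2 /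
                  (σsq + Etr / Real.sqrt M * ∑ l₁, β j l₁ kd) ^ 2)
            + (∑ j ∈ Finset.univ.erase l,
                (∑ i, (β j j i) ^ 2 / (σsq + Etr / Real.sqrt M * ∑ l₁, β j l₁ i))⁻¹ *
                  (Ed / Real.sqrt M) * β j j kd ^ 2 *
                  (σsq + Etr / Real.sqrt M * ∑ l₁ ∈ Finset.univ.erase l, β j l₁ kd) * β j l kd /
                  (σsq + Etr / Real.sqrt M * ∑ l₁, β j l₁ kd) ^ 2)
            + (∑ j, ∑ i ∈ Finset.univ.erase kd,
                (∑ i', (β j j i') ^ 2 / (σsq + Etr / Real.sqrt M * ∑ l₁, β j l₁ i'))⁻¹ *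
                  (Ed / Real.sqrt M) * β j j i ^ 2 * β j l kd /
                  (σsq + Etr / Real.sqrt M * ∑ l₁, β j l₁ i))
            + (∑ j, ∑ n, Eu / Real.sqrt M * βI j n)
            - Eu / Real.sqrt M * βI l ku + σsq + κ * (Eu / Real.sqrt M) * βI l ku)))
      Filter.atTop
      (nhds (1 + ((∑ i, (β l l i) ^ 2) / σsq)⁻¹ * (Etr * Ed) * β l l kd ^ 4 /
        (σsq ^ 2 * ((∑ j ∈ Finset.univ.erase l,
          ((∑ i, (β j j i) ^ 2) / σsq)⁻¹ * (Etr * Ed) * β j l kd ^ 2 * β j j kd ^ 2 / σsq ^ 2)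
          + σsq)))) :=
    tendsto_const_nhds.add (hnum.div hden hdenne)
  -- identify the limit with the target value
  have hVeq : 1 + ((∑ i, (β l l i) ^ 2) / σsq)⁻¹ * (Etr * Ed) * β l l kd ^ 4 /
      (σsq ^ 2 * ((∑ j ∈ Finset.univ.erase l,
        ((∑ i, (β j j i) ^ 2) / σsq)⁻¹ * (Etr * Ed) * β j l kd ^ 2 * β j j kd ^ 2 / σsq ^ 2)
        + σsq))
      = 1 + Etr * Ed * (β l l kd) ^ 4 /
        ((∑ i, (β l l i) ^ 2) / σsq *
          (∑ j ∈ Finset.univ.erase l,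
              Etr * Ed * (β j j kd) ^ 2 * (β j l kd) ^ 2 / ((∑ i, (β j j i) ^ 2) / σsq)
            + σsq ^ 3)) := by
    have hsum : (∑ j ∈ Finset.univ.erase l,
        ((∑ i, (β j j i) ^ 2) / σsq)⁻¹ * (Etr * Ed) * β j l kd ^ 2 * β j j kd ^ 2 / σsq ^ 2)
        = (∑ j ∈ Finset.univ.erase l,
            Etr * Ed * (β j j kd) ^ 2 * (β j l kd) ^ 2 / ((∑ i, (β j j i) ^ 2) / σsq)) / σsq ^ 2 := by
      rw [Finset.sum_div]
      refine Finset.sum_congr rfl fun j _ => ?_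
      have h := hSne j
      field_simp
    rw [hsum]
    have e1 : σsq ^ 2 * ((∑ j ∈ Finset.univ.erase l,
        Etr * Ed * (β j j kd) ^ 2 * (β j l kd) ^ 2 / ((∑ i, (β j j i) ^ 2) / σsq)) / σsq ^ 2 + σsq)
        = (∑ j ∈ Finset.univ.erase l,
            Etr * Ed * (β j j kd) ^ 2 * (β j l kd) ^ 2 / ((∑ i, (β j j i) ^ 2) / σsq)) + σsq ^ 3 := by
      field_simp
    rw [e1]
    congr 1
    rw [show ((∑ i, (β l l i) ^ 2) / σsq)⁻¹ * (Etr * Ed) * β l l kd ^ 4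
        = Etr * Ed * β l l kd ^ 4 / ((∑ i, (β l l i) ^ 2) / σsq) from by ring, div_div]
  rw [hVeq] at harg
  -- positivity of the limit argument of logb
  have hTpos : 0 ≤ ∑ j ∈ Finset.univ.erase l,
      Etr * Ed * (β j j kd) ^ 2 * (β j l kd) ^ 2 / ((∑ i, (β j j i) ^ 2) / σsq) :=
    Finset.sum_nonneg fun j _ => by positivity
  have hVpos : (0:ℝ) < 1 + Etr * Ed * (β l l kd) ^ 4 /
      ((∑ i, (β l l i) ^ 2) / σsq *
        (∑ j ∈ Finset.univ.erase l,
            Etr * Ed * (β j j kd) ^ 2 * (β j l kd) ^ 2 / ((∑ i, (β j j i) ^ 2) / σsq)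
          + σsq ^ 3)) := by
    have hfr : (0:ℝ) ≤ Etr * Ed * (β l l kd) ^ 4 /
        ((∑ i, (β l l i) ^ 2) / σsq *
          (∑ j ∈ Finset.univ.erase l,
              Etr * Ed * (β j j kd) ^ 2 * (β j l kd) ^ 2 / ((∑ i, (β j j i) ^ 2) / σsq)
            + σsq ^ 3)) := by
      apply div_nonneg (by positivity)
      apply mul_nonneg (by positivity)
      have : (0:ℝ) < σsq ^ 3 := by positivity
      linarith
    linarith
  -- reduce the goal to convergence of the argument
  refine Filter.Tendsto.comp (Real.continuousAt_logb hVpos.ne') ?_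
  refine Filter.Tendsto.congr' ?_ harg
  -- eventual equality between the cleaned-up expression and the original one
  filter_upwards [Filter.eventually_ge_atTop 1] with M hM
  have hM0 : (0:ℝ) < (M : ℝ) := by exact_mod_cast hM
  have hs : Real.sqrt M ≠ 0 := by positivity
  have hss : Real.sqrt M * Real.sqrt M = (M : ℝ) := Real.mul_self_sqrt hM0.le
  have h1 : (Etr / Real.sqrt M) * (Ed / Real.sqrt M) * (M : ℝ) = Etr * Ed := by
    rw [div_mul_div_comm, hss, div_mul_cancel₀ _ hM0.ne']
  have h2 : (Etr / Real.sqrt M) * (Ed / Real.sqrt M) * ((M : ℝ) + 1)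
      = Etr * Ed * (1 + ((M : ℝ))⁻¹) := by
    rw [div_mul_div_comm, hss]
    field_simp
  have key1 : ∀ x B : ℝ,
      x * (Etr / Real.sqrt M) * (Ed / Real.sqrt M) * (M : ℝ) * B = x * (Etr * Ed) * B := by
    intro x B
    rw [show x * (Etr / Real.sqrt M) * (Ed / Real.sqrt M) * (M : ℝ) * B
        = (Etr / Real.sqrt M) * (Ed / Real.sqrt M) * (M : ℝ) * (x * B) from by ring, h1]
    ring
  have key2 : ∀ x a b c : ℝ,
      x * (Etr / Real.sqrt M) * (Ed / Real.sqrt M) * ((M : ℝ) + 1) * a * b / c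
        = x * (Etr * Ed * (1 + ((M : ℝ))⁻¹)) * a * b / c := by
    intro x a b c
    rw [show x * (Etr / Real.sqrt M) * (Ed / Real.sqrt M) * ((M : ℝ) + 1) * a * b
        = (Etr / Real.sqrt M) * (Ed / Real.sqrt M) * ((M : ℝ) + 1) * (x * a * b) from by ring, h2]
    ring
  simp only [key1, key2]
end

section
/- Fix L ≥ 1, K_u ≥ 1, cell index j ∈ Fin L, user index n ∈ Fin K_u, constants E_u > 0, E_d > 0, σ² > 0, κ ≥ 0, a scaling exponent C > 1, coefficients β_u : Fin L → Fin K_u → ℝ with β_u j n > 0 and β_u l m ≥ 0, β_b : Fin L → ℝ with β_b l ≥ 0, and β_bjj ≥ 0. For M : ℕ define P_u(M) = E_u/M^C, P_d(M) = E_d/M^C and R(M) = log₂( 1 + P_u(M)·(M−1)·β_u j n / ( P_u(M)·Σ_{(l,m)≠(j,n)} β_u l m + P_d(M)·Σ_{l≠j} β_b l + σ² + κ·P_d(M)·β_bjj ) ). Then R(M) → 0 as M → ∞ (Filter.atTop). -/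
/-- Remark 1, first half: with perfect CSI and transmit powers scaled as `1/M^C` with `C > 1`,
the closed-form uplink achievable rate of user `n` in cell `j` tends to zero as `M → ∞`. -/
theorem uplink_rate_tendsto_zero_of_fast_power_scaling
    (L Ku : ℕ) (hL : 1 ≤ L) (hKu : 1 ≤ Ku) (j : Fin L) (n : Fin Ku)
    (Eu Ed σsq : ℝ) (hEu : 0 < Eu) (hEd : 0 < Ed) (hσ : 0 < σsq)
    (κ : ℝ) (hκ : 0 ≤ κ) (C : ℝ) (hC : 1 < C)
    (βu : Fin L → Fin Ku → ℝ) (hβujn : 0 < βu j n) (hβu : ∀ l m, 0 ≤ βu l m)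
    (βb : Fin L → ℝ) (hβb : ∀ l, 0 ≤ βb l) (βbjj : ℝ) (hβbjj : 0 ≤ βbjj) :
    Filter.Tendsto (fun M : ℕ =>
        let Pu : ℝ := Eu / (M : ℝ) ^ C
        let Pd : ℝ := Ed / (M : ℝ) ^ C
        Real.logb 2 (1 + Pu * ((M : ℝ) - 1) * βu j n /
          (Pu * ∑ p ∈ Finset.univ.erase (j, n), βu p.1 p.2
            + Pd * ∑ l ∈ Finset.univ.erase j, βb l
            + σsq + κ * Pd * βbjj)))
      Filter.atTop (nhds 0) := by
  set f : ℕ → ℝ := fun M =>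
    (Eu / (M : ℝ) ^ C) * ((M : ℝ) - 1) * βu j n /
      ((Eu / (M : ℝ) ^ C) * ∑ p ∈ Finset.univ.erase (j, n), βu p.1 p.2
        + (Ed / (M : ℝ) ^ C) * ∑ l ∈ Finset.univ.erase j, βb l
        + σsq + κ * (Ed / (M : ℝ) ^ C) * βbjj) with hf
  have hnum : ∀ M : ℕ, 1 ≤ M → 0 ≤ (Eu / (M : ℝ) ^ C) * ((M : ℝ) - 1) * βu j n := by
    intro M hM
    have h1 : (1 : ℝ) ≤ (M : ℝ) := by exact_mod_cast hM
    have hMC : (0:ℝ) < (M : ℝ) ^ C := Real.rpow_pos_of_pos (by linarith) C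
    exact mul_nonneg (mul_nonneg (div_nonneg hEu.le hMC.le) (by linarith)) hβujn.le
  have hden : ∀ M : ℕ, σsq ≤
      ((Eu / (M : ℝ) ^ C) * ∑ p ∈ Finset.univ.erase (j, n), βu p.1 p.2
        + (Ed / (M : ℝ) ^ C) * ∑ l ∈ Finset.univ.erase j, βb l
        + σsq + κ * (Ed / (M : ℝ) ^ C) * βbjj) := by
    intro M
    have hMC : (0:ℝ) ≤ (M : ℝ) ^ C := Real.rpow_nonneg (Nat.cast_nonneg M) C
    have h1 : (0:ℝ) ≤ (Eu / (M : ℝ) ^ C) * ∑ p ∈ Finset.univ.erase (j, n), βu p.1 p.2 := by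
      apply mul_nonneg (by positivity)
      exact Finset.sum_nonneg fun p _ => hβu p.1 p.2
    have h2 : (0:ℝ) ≤ (Ed / (M : ℝ) ^ C) * ∑ l ∈ Finset.univ.erase j, βb l := by
      apply mul_nonneg (by positivity)
      exact Finset.sum_nonneg fun l _ => hβb l
    have h3 : (0:ℝ) ≤ κ * (Ed / (M : ℝ) ^ C) * βbjj := by positivity
    linarith
  -- the fraction tends to zero
  have hf0 : Filter.Tendsto f Filter.atTop (nhds 0) := by
    have hbound : Filter.Tendsto (fun M : ℕ => (Eu * βu j n / σsq) * (M : ℝ) ^ (1 - C))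
        Filter.atTop (nhds 0) := by
      have h1 : Filter.Tendsto (fun x : ℝ => x ^ (-(C - 1))) Filter.atTop (nhds 0) :=
        tendsto_rpow_neg_atTop (by linarith)
      have h2 : Filter.Tendsto (fun M : ℕ => ((M : ℝ)) ^ (1 - C)) Filter.atTop (nhds 0) := by
        have := h1.comp (tendsto_natCast_atTop_atTop (R := ℝ))
        simpa [Function.comp_def, neg_sub] using this
      simpa using h2.const_mul (Eu * βu j n / σsq)
    have hge : ∀ᶠ M : ℕ in Filter.atTop, 0 ≤ f M := by
      filter_upwards [Filter.eventually_ge_atTop 1] with M hM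
      exact div_nonneg (hnum M hM) (le_trans hσ.le (hden M))
    have hle : ∀ᶠ M : ℕ in Filter.atTop, f M ≤ (Eu * βu j n / σsq) * (M : ℝ) ^ (1 - C) := by
      filter_upwards [Filter.eventually_ge_atTop 1] with M hM
      have h1 : (1 : ℝ) ≤ (M : ℝ) := by exact_mod_cast hM
      have hMpos : (0:ℝ) < (M : ℝ) := by linarith
      have hMC : (0:ℝ) < (M : ℝ) ^ C := Real.rpow_pos_of_pos hMpos C
      have step1 : f M ≤ (Eu / (M : ℝ) ^ C) * ((M : ℝ) - 1) * βu j n / σsq := by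
        rw [hf]
        exact div_le_div_of_nonneg_left (hnum M hM) hσ (hden M)
      have step2 : (Eu / (M : ℝ) ^ C) * ((M : ℝ) - 1) * βu j n / σsq
          ≤ (Eu * βu j n / σsq) * (M : ℝ) ^ (1 - C) := by
        have hpow : (M : ℝ) ^ (1 - C) = (M : ℝ) / (M : ℝ) ^ C := by
          rw [Real.rpow_sub hMpos, Real.rpow_one]
        have key : ((M : ℝ) - 1) / (M : ℝ) ^ C ≤ (M : ℝ) / (M : ℝ) ^ C := by
          gcongr
          linarith
        have e1 : (Eu / (M : ℝ) ^ C) * ((M : ℝ) - 1) * βu j n / σsq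
            = (Eu * βu j n / σsq) * (((M : ℝ) - 1) / (M : ℝ) ^ C) := by
          field_simp
        rw [hpow, e1]
        apply mul_le_mul_of_nonneg_left key (by positivity)
      linarith
    exact squeeze_zero' hge hle hbound
  -- conclude via continuity of logb at 1
  have h1f : Filter.Tendsto (fun M => 1 + f M) Filter.atTop (nhds 1) := by
    simpa using (tendsto_const_nhds.add hf0 : Filter.Tendsto (fun M => 1 + f M)
      Filter.atTop (nhds (1 + 0)))
  have hlog : Filter.Tendsto (fun M => Real.logb 2 (1 + f M)) Filter.atTop (nhds 0) := by
    have hlog1 : Filter.Tendsto (fun M => Real.log (1 + f M)) Filter.atTop (nhds 0) := by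
      have := (Real.continuousAt_log one_ne_zero).tendsto.comp h1f
      simpa [Function.comp_def] using this
    simpa [Real.logb] using hlog1.div_const (Real.log 2)
  exact hlog
end

section
/- Fix L ≥ 1, K_u ≥ 1, cell index j ∈ Fin L, user index n ∈ Fin K_u, constants E_u > 0, E_d > 0, σ² > 0, κ ≥ 0, a scaling exponent C with 0 ≤ C < 1, coefficients β_u : Fin L → Fin K_u → ℝ with β_u j n > 0 and β_u l m ≥ 0, β_b : Fin L → ℝ with β_b l ≥ 0, and β_bjj ≥ 0. For M : ℕ define P_u(M) = E_u/M^C, P_d(M) = E_d/M^C and R(M) = log₂( 1 + P_u(M)·(M−1)·β_u j n / ( P_u(M)·Σ_{(l,m)≠(j,n)} β_u l m + P_d(M)·Σ_{l≠j} β_b l + σ² + κ·P_d(M)·β_bjj ) ). Then R(M) → ∞ as M → ∞, i.e., Filter.Tendsto R Filter.atTop Filter.atTop. -/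
/-- Remark 1, second half: with perfect CSI and transmit powers scaled as `1/M^C` with
`0 ≤ C < 1`, the closed-form uplink achievable rate of user `n` in cell `j` grows without bound
as `M → ∞`. -/
theorem uplink_rate_tendsto_atTop_of_slow_power_scaling
    (L Ku : ℕ) (hL : 1 ≤ L) (hKu : 1 ≤ Ku) (j : Fin L) (n : Fin Ku)
    (Eu Ed σsq : ℝ) (hEu : 0 < Eu) (hEd : 0 < Ed) (hσ : 0 < σsq)
    (κ : ℝ) (hκ : 0 ≤ κ) (C : ℝ) (hC0 : 0 ≤ C) (hC1 : C < 1)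
    (βu : Fin L → Fin Ku → ℝ) (hβujn : 0 < βu j n) (hβu : ∀ l m, 0 ≤ βu l m)
    (βb : Fin L → ℝ) (hβb : ∀ l, 0 ≤ βb l) (βbjj : ℝ) (hβbjj : 0 ≤ βbjj) :
    Filter.Tendsto (fun M : ℕ =>
        let Pu : ℝ := Eu / (M : ℝ) ^ C
        let Pd : ℝ := Ed / (M : ℝ) ^ C
        Real.logb 2 (1 + Pu * ((M : ℝ) - 1) * βu j n /
          (Pu * ∑ p ∈ Finset.univ.erase (j, n), βu p.1 p.2
            + Pd * ∑ l ∈ Finset.univ.erase j, βb l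
            + σsq + κ * Pd * βbjj)))
      Filter.atTop Filter.atTop := by
  have h1C : (0:ℝ) < 1 - C := by linarith
  set A := βu j n with hA
  set S1 := ∑ p ∈ Finset.univ.erase (j, n), βu p.1 p.2 with hS1def
  set S2 := ∑ l ∈ Finset.univ.erase j, βb l with hS2def
  have hS1 : 0 ≤ S1 := Finset.sum_nonneg fun p _ => hβu p.1 p.2
  have hS2 : 0 ≤ S2 := Finset.sum_nonneg fun l _ => hβb l
  set Kc : ℝ := Eu * S1 + Ed * S2 + σsq + κ * Ed * βbjj with hKc
  have hKpos : 0 < Kc := by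
    have h1 : 0 ≤ Eu * S1 := mul_nonneg hEu.le hS1
    have h2 : 0 ≤ Ed * S2 := mul_nonneg hEd.le hS2
    have h3 : 0 ≤ κ * Ed * βbjj := mul_nonneg (mul_nonneg hκ hEd.le) hβbjj
    simp only [hKc]; linarith
  set f : ℕ → ℝ := fun M =>
    (Eu / (M : ℝ) ^ C) * ((M : ℝ) - 1) * A /
      ((Eu / (M : ℝ) ^ C) * S1 + (Ed / (M : ℝ) ^ C) * S2 + σsq
        + κ * (Ed / (M : ℝ) ^ C) * βbjj) with hf
  have key : ∀ M : ℕ, 2 ≤ M →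
      (Eu * A / (2 * Kc)) * (M : ℝ) ^ (1 - C) ≤ f M := by
    intro M hM
    have hM2 : (2:ℝ) ≤ (M : ℝ) := by exact_mod_cast hM
    have hMpos : (0:ℝ) < (M : ℝ) := by linarith
    have hMC : (0:ℝ) < (M : ℝ) ^ C := Real.rpow_pos_of_pos hMpos C
    have hMC1 : (1:ℝ) ≤ (M : ℝ) ^ C := Real.one_le_rpow (by linarith) hC0
    have hPu : 0 < Eu / (M : ℝ) ^ C := by positivity
    have hPd : 0 < Ed / (M : ℝ) ^ C := by positivity
    set D : ℝ := (Eu / (M : ℝ) ^ C) * S1 + (Ed / (M : ℝ) ^ C) * S2 + σsq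
        + κ * (Ed / (M : ℝ) ^ C) * βbjj with hD
    have hDpos : 0 < D := by
      have h1 : 0 ≤ (Eu / (M : ℝ) ^ C) * S1 := mul_nonneg hPu.le hS1
      have h2 : 0 ≤ (Ed / (M : ℝ) ^ C) * S2 := mul_nonneg hPd.le hS2
      have h3 : 0 ≤ κ * (Ed / (M : ℝ) ^ C) * βbjj :=
        mul_nonneg (mul_nonneg hκ hPd.le) hβbjj
      simp only [hD]; linarith
    have hDK : D ≤ Kc := by
      have hPu' : Eu / (M : ℝ) ^ C ≤ Eu := by
        rw [div_le_iff₀ hMC]; nlinarith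
      have hPd' : Ed / (M : ℝ) ^ C ≤ Ed := by
        rw [div_le_iff₀ hMC]; nlinarith
      have h1 : (Eu / (M : ℝ) ^ C) * S1 ≤ Eu * S1 := mul_le_mul_of_nonneg_right hPu' hS1
      have h2 : (Ed / (M : ℝ) ^ C) * S2 ≤ Ed * S2 := mul_le_mul_of_nonneg_right hPd' hS2
      have h3 : κ * (Ed / (M : ℝ) ^ C) * βbjj ≤ κ * Ed * βbjj := by
        apply mul_le_mul_of_nonneg_right _ hβbjj
        exact mul_le_mul_of_nonneg_left hPd' hκ
      simp only [hD, hKc]; linarith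
    have hrw : (Eu * A / (2 * Kc)) * (M : ℝ) ^ (1 - C)
        = (Eu / (M : ℝ) ^ C) * ((M : ℝ) / 2) * A / Kc := by
      rw [Real.rpow_sub hMpos, Real.rpow_one]
      field_simp
    rw [hrw]
    show (Eu / (M : ℝ) ^ C) * ((M : ℝ) / 2) * A / Kc
        ≤ (Eu / (M : ℝ) ^ C) * ((M : ℝ) - 1) * A / D
    have half : (M : ℝ) / 2 ≤ (M : ℝ) - 1 := by linarith
    have hnum : (Eu / (M : ℝ) ^ C) * ((M : ℝ) / 2) * A
        ≤ (Eu / (M : ℝ) ^ C) * ((M : ℝ) - 1) * A := by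
      apply mul_le_mul_of_nonneg_right _ hβujn.le
      exact mul_le_mul_of_nonneg_left half hPu.le
    have hMm1 : (0:ℝ) ≤ (M : ℝ) - 1 := by linarith
    calc (Eu / (M : ℝ) ^ C) * ((M : ℝ) / 2) * A / Kc
        ≤ (Eu / (M : ℝ) ^ C) * ((M : ℝ) - 1) * A / Kc := by
          gcongr
      _ ≤ (Eu / (M : ℝ) ^ C) * ((M : ℝ) - 1) * A / D :=
          div_le_div_of_nonneg_left
            (mul_nonneg (mul_nonneg hPu.le hMm1) hβujn.le) hDpos hDK
  have hc : 0 < Eu * A / (2 * Kc) := by positivity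
  have hg : Filter.Tendsto (fun M : ℕ => (Eu * A / (2 * Kc)) * (M : ℝ) ^ (1 - C))
      Filter.atTop Filter.atTop := by
    apply Filter.Tendsto.const_mul_atTop hc
    exact (tendsto_rpow_atTop h1C).comp tendsto_natCast_atTop_atTop
  have hfT : Filter.Tendsto f Filter.atTop Filter.atTop := by
    apply Filter.tendsto_atTop_mono' _ _ hg
    filter_upwards [Filter.eventually_ge_atTop 2] with M hM using key M hM
  have h1f : Filter.Tendsto (fun M => 1 + f M) Filter.atTop Filter.atTop :=
    Filter.tendsto_atTop_add_const_left _ 1 hfT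
  exact (Real.tendsto_logb_atTop one_lt_two).comp h1f
end
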